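/- Let d ≥ 2, let Ψ ∈ ℂ^d be a unit vector with rank-one projector P = Ψ Ψ†, let 0 ≤ λ < 1, and let Ω = P + λ(I − P). Let k, N be integers with k ≥ 0 and N ≥ k + 1, and let δ be a real number with B_{N,k}(1−λ) ≤ δ ≤ 1. Let J(N,k,δ) be the unique x ∈ [0,1] with B_{N,k}(x) = δ. Then the set { ⟨Ψ, σ Ψ⟩ : σ a density matrix on ℂ^d with B_{N,k}(1 − tr(Ω σ)) ≥ δ } has least element 1 − J(N,k,δ)/(1 − λ). In other words, the standard-QSV fidelity certificate satisfies F^S_λ(k,N,δ) = 1 − ν^{-1} J(N,k,δ) with ν = 1 − λ. -/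

import Mathlib

open Matrix ComplexOrder

/-- The binomial cumulative distribution function: the probability of at most `k`
successes in `z` independent Bernoulli trials with success probability `p`. -/
noncomputable def binomCDF (z k : ℕ) (p : ℝ) : ℝ :=
  ∑ j ∈ Finset.range (k + 1), (z.choose j : ℝ) * p ^ j * (1 - p) ^ (z - j)

lemma term_hasDeriv (N j : ℕ) (p : ℝ) :
    HasDerivAt (fun p : ℝ => (N.choose j : ℝ) * p ^ j * (1 - p) ^ (N - j))
      ((N.choose j : ℝ) * ((j : ℝ) * p ^ (j - 1) * (1 - p) ^ (N - j)
        - ((N - j : ℕ) : ℝ) * p ^ j * (1 - p) ^ (N - j - 1))) p := by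
  have h1 : HasDerivAt (fun p : ℝ => p ^ j) ((j : ℝ) * p ^ (j - 1)) p := hasDerivAt_pow j p
  have h2 : HasDerivAt (fun p : ℝ => (1 - p) ^ (N - j))
      (((N - j : ℕ) : ℝ) * (1 - p) ^ (N - j - 1) * (-1)) p := by
    exact (hasDerivAt_pow (N - j) (1 - p)).comp p (((hasDerivAt_id p).const_sub 1))
  have := (h1.mul h2).const_mul ((N.choose j : ℝ))
  convert this using 1
  · rfl
  · rfl
  · funext q; simp only [Pi.mul_apply]; ring
  · ring

lemma binomCDF_hasDeriv (N k : ℕ) (p : ℝ) :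
    HasDerivAt (binomCDF N k)
      (-(((N - k : ℕ) : ℝ) * (N.choose k : ℝ) * p ^ k * (1 - p) ^ (N - k - 1))) p := by
  induction k with
  | zero =>
    have : binomCDF N 0 = fun p : ℝ => (N.choose 0 : ℝ) * p ^ 0 * (1 - p) ^ (N - 0) := by
      funext q; simp [binomCDF]
    rw [this]
    have := term_hasDeriv N 0 p
    convert this using 1
    simp
  | succ k ih =>
    have hsum : binomCDF N (k+1) = fun p : ℝ => binomCDF N k p
        + (N.choose (k+1) : ℝ) * p ^ (k+1) * (1 - p) ^ (N - (k+1)) := by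
      funext q; simp [binomCDF, Finset.sum_range_succ]
    rw [hsum]
    have h := ih.add (term_hasDeriv N (k+1) p)
    convert h using 1
    · rfl
    · rfl
    · rfl
    have hch : ((k:ℝ)+1) * (N.choose (k+1) : ℝ) = ((N - k : ℕ) : ℝ) * (N.choose k : ℝ) := by
      have := Nat.choose_succ_right_eq N k
      have : (N.choose (k+1) * (k+1) : ℕ) = (N.choose k * (N - k) : ℕ) := this
      have := congrArg (Nat.cast : ℕ → ℝ) this
      push_cast at this
      linarith
    have e1 : N - (k+1) = N - k - 1 := by omega
    have e3 : (k+1) - 1 = k := by omega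
    rw [e1, e3]
    push_cast
    linear_combination (-(p ^ k * (1 - p) ^ (N - k - 1))) * hch

lemma binomCDF_strictAntiOn (N k : ℕ) (h : k < N) :
    StrictAntiOn (binomCDF N k) (Set.Icc (0:ℝ) 1) := by
  apply strictAntiOn_of_deriv_neg (convex_Icc 0 1)
  · exact fun p _ => ((binomCDF_hasDeriv N k p).differentiableAt).continuousAt.continuousWithinAt
  · intro p hp
    rw [interior_Icc] at hp
    rw [(binomCDF_hasDeriv N k p).deriv]
    have h1 : (0:ℝ) < ((N - k : ℕ) : ℝ) := by
      have : 1 ≤ N - k := by omega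
      exact_mod_cast Nat.lt_of_lt_of_le Nat.zero_lt_one this
    have h2 : (0:ℝ) < (N.choose k : ℝ) := by
      exact_mod_cast Nat.choose_pos (le_of_lt h)
    have h3 : (0:ℝ) < p ^ k := pow_pos hp.1 k
    have h4 : (0:ℝ) < (1 - p) ^ (N - k - 1) := pow_pos (by linarith [hp.2]) _
    have := mul_pos (mul_pos (mul_pos h1 h2) h3) h4
    linarith

lemma binomCDF_le_rev (N k : ℕ) (h : k < N) {p q : ℝ}
    (hp : p ∈ Set.Icc (0:ℝ) 1) (hq : q ∈ Set.Icc (0:ℝ) 1)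
    (hle : binomCDF N k q ≤ binomCDF N k p) : p ≤ q := by
  by_contra hc
  push_neg at hc
  exact absurd (binomCDF_strictAntiOn N k h hq hp hc) (not_lt.mpr hle)

section
variable {d : ℕ}

lemma trace_vecMulVec_mul (Ψ : Fin d → ℂ) (σ : Matrix (Fin d) (Fin d) ℂ) :
    (Matrix.vecMulVec Ψ (star Ψ) * σ).trace = star Ψ ⬝ᵥ σ.mulVec Ψ := by
  simp only [Matrix.trace, Matrix.diag, Matrix.mul_apply, Matrix.vecMulVec_apply,
    dotProduct, Matrix.mulVec, Pi.star_apply]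
  rw [Finset.sum_comm]
  congr 1; funext j
  rw [Finset.mul_sum]
  congr 1; funext i
  ring

lemma vecMulVec_mulVec (Ψ v x : Fin d → ℂ) :
    (Matrix.vecMulVec Ψ v).mulVec x = (v ⬝ᵥ x) • Ψ := by
  funext i
  simp only [Matrix.mulVec, Matrix.vecMulVec_apply, dotProduct, Pi.smul_apply,
    smul_eq_mul, Finset.sum_mul, Finset.mul_sum]
  exact Finset.sum_congr rfl fun j _ => by ring

lemma P_psd (Ψ : Fin d → ℂ) : (Matrix.vecMulVec Ψ (star Ψ)).PosSemidef := by
  apply Matrix.PosSemidef.of_dotProduct_mulVec_nonneg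
  · ext i j
    simp [Matrix.conjTranspose_apply, Matrix.vecMulVec_apply, mul_comm]
  · intro x
    rw [vecMulVec_mulVec]
    have : star x ⬝ᵥ (star Ψ ⬝ᵥ x) • Ψ = (star Ψ ⬝ᵥ x) * (star x ⬝ᵥ Ψ) := by
      rw [dotProduct_smul, smul_eq_mul]
    rw [this, Matrix.star_dotProduct x Ψ]
    exact mul_star_self_nonneg _

lemma P_idem (Ψ : Fin d → ℂ) (hΨ : star Ψ ⬝ᵥ Ψ = 1) :
    (Matrix.vecMulVec Ψ (star Ψ)) * (Matrix.vecMulVec Ψ (star Ψ))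
      = Matrix.vecMulVec Ψ (star Ψ) := by
  ext i j
  simp only [Matrix.mul_apply, Matrix.vecMulVec_apply]
  have : ∑ l, Ψ i * star Ψ l * (Ψ l * star Ψ j)
      = (Ψ i * star Ψ j) * (star Ψ ⬝ᵥ Ψ) := by
    rw [dotProduct, Finset.mul_sum]
    congr 1; funext l; simp [Pi.star_apply]; ring
  rw [this, hΨ, mul_one]

lemma oneSubP_psd (Ψ : Fin d → ℂ) (hΨ : star Ψ ⬝ᵥ Ψ = 1) :
    ((1 : Matrix (Fin d) (Fin d) ℂ) - Matrix.vecMulVec Ψ (star Ψ)).PosSemidef := by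
  have h : ((1 : Matrix (Fin d) (Fin d) ℂ) - Matrix.vecMulVec Ψ (star Ψ))
      = ((1 : Matrix (Fin d) (Fin d) ℂ) - Matrix.vecMulVec Ψ (star Ψ))
        * ((1 : Matrix (Fin d) (Fin d) ℂ) - Matrix.vecMulVec Ψ (star Ψ))ᴴ := by
    rw [Matrix.conjTranspose_sub, Matrix.conjTranspose_one, (P_psd Ψ).1.eq,
      sub_mul, one_mul, mul_sub, mul_one, P_idem Ψ hΨ]
    abel
  rw [h]
  exact Matrix.posSemidef_self_mul_conjTranspose _

lemma psd_smul_real {M : Matrix (Fin d) (Fin d) ℂ} (hM : M.PosSemidef) {c : ℝ} (hc : 0 ≤ c) :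
    ((c : ℂ) • M).PosSemidef := by
  apply Matrix.PosSemidef.of_dotProduct_mulVec_nonneg
  · rw [Matrix.IsHermitian, Matrix.conjTranspose_smul, hM.1.eq]
    congr 1
    exact Complex.conj_ofReal c
  · intro x
    rw [Matrix.smul_mulVec, dotProduct_smul, smul_eq_mul]
    have h0 : (0:ℂ) ≤ (c:ℂ) := by
      rw [Complex.le_def]; simp [hc]
    exact mul_nonneg h0 (hM.dotProduct_mulVec_nonneg x)

lemma psd_trace_nonneg {M : Matrix (Fin d) (Fin d) ℂ} (hM : M.PosSemidef) :
    0 ≤ M.trace := by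
  rw [Matrix.trace]
  apply Finset.sum_nonneg
  intro i _
  have := hM.dotProduct_mulVec_nonneg (Pi.single i 1)
  simpa [dotProduct, Matrix.mulVec, Pi.single_apply, apply_ite] using this

end

theorem SQSV_fidelity_certificate
    (d : ℕ) (hd : 2 ≤ d) (Ψ : Fin d → ℂ)
    (hΨ : star Ψ ⬝ᵥ Ψ = 1)
    (l : ℝ) (hl0 : 0 ≤ l) (hl1 : l < 1)
    (P Ω : Matrix (Fin d) (Fin d) ℂ)
    (hP : P = Matrix.vecMulVec Ψ (star Ψ))
    (hΩ : Ω = P + (l : ℂ) • ((1 : Matrix (Fin d) (Fin d) ℂ) - P))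
    (k N : ℕ) (hN : k + 1 ≤ N)
    (δ : ℝ) (hδlb : binomCDF N k (1 - l) ≤ δ) (hδ1 : δ ≤ 1)
    (J : ℝ) (hJmem : J ∈ Set.Icc (0 : ℝ) 1) (hJ : binomCDF N k J = δ) :
    IsLeast
      { x : ℝ | ∃ σ : Matrix (Fin d) (Fin d) ℂ,
          σ.PosSemidef ∧ σ.trace = 1 ∧
          δ ≤ binomCDF N k (1 - ((Ω * σ).trace).re) ∧
          x = (star Ψ ⬝ᵥ σ.mulVec Ψ).re }
      (1 - J / (1 - l)) := by
  have hν : (0:ℝ) < 1 - l := by linarith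
  have hkN : k < N := hN
  -- trace identities
  have hPtr : ∀ σ : Matrix (Fin d) (Fin d) ℂ, (P * σ).trace = star Ψ ⬝ᵥ σ.mulVec Ψ := by
    intro σ; rw [hP]; exact trace_vecMulVec_mul Ψ σ
  have keyTr : ∀ σ : Matrix (Fin d) (Fin d) ℂ, σ.trace = 1 →
      (Ω * σ).trace = (star Ψ ⬝ᵥ σ.mulVec Ψ)
        + (l:ℂ) * (1 - star Ψ ⬝ᵥ σ.mulVec Ψ) := by
    intro σ hσ
    have h1 : ((1 : Matrix (Fin d) (Fin d) ℂ) - P) * σ = σ - P * σ := by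
      rw [sub_mul, one_mul]
    rw [hΩ, add_mul, Matrix.smul_mul, Matrix.trace_add, Matrix.trace_smul, h1,
      Matrix.trace_sub, hσ, hPtr σ, smul_eq_mul]
  have keyRe : ∀ σ : Matrix (Fin d) (Fin d) ℂ, σ.trace = 1 →
      1 - ((Ω * σ).trace).re = (1 - l) * (1 - (star Ψ ⬝ᵥ σ.mulVec Ψ).re) := by
    intro σ hσ
    rw [keyTr σ hσ]
    simp only [Complex.add_re, Complex.mul_re, Complex.ofReal_re, Complex.ofReal_im,
      Complex.sub_re, Complex.one_re, Complex.sub_im, Complex.one_im]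
    ring
  -- J ≤ 1 - l
  have hJle : J ≤ 1 - l := by
    apply binomCDF_le_rev N k hkN hJmem (Set.mem_Icc.mpr ⟨by linarith, by linarith⟩)
    rw [hJ]; exact hδlb
  set x0 : ℝ := 1 - J / (1 - l) with hx0def
  have hx0mem : x0 ∈ Set.Icc (0:ℝ) 1 := by
    constructor
    · have : J / (1 - l) ≤ 1 := (div_le_one hν).mpr hJle
      simp only [hx0def]; linarith
    · have : 0 ≤ J / (1 - l) := div_nonneg hJmem.1 (le_of_lt hν)
      simp only [hx0def]; linarith
  constructor
  · -- membership
    have hd1 : (0:ℝ) < (d:ℝ) - 1 := by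
      have : (2:ℝ) ≤ (d:ℝ) := by exact_mod_cast hd
      linarith
    set b : ℝ := (1 - x0) / ((d:ℝ) - 1) with hbdef
    have hb0 : 0 ≤ b := div_nonneg (by linarith [hx0mem.2]) (le_of_lt hd1)
    set σ0 : Matrix (Fin d) (Fin d) ℂ
      := (x0:ℂ) • P + (b:ℂ) • ((1 : Matrix (Fin d) (Fin d) ℂ) - P) with hσ0def
    have hval : star Ψ ⬝ᵥ σ0.mulVec Ψ = (x0:ℂ) := by
      rw [hσ0def, Matrix.add_mulVec, Matrix.smul_mulVec, Matrix.smul_mulVec,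
        Matrix.sub_mulVec, Matrix.one_mulVec, hP, vecMulVec_mulVec, hΨ, one_smul]
      simp [hΨ]
    have htr1 : σ0.trace = 1 := by
      have htrP : P.trace = 1 := by
        have h := trace_vecMulVec_mul Ψ 1
        rw [mul_one] at h
        rw [hP, h, Matrix.one_mulVec, hΨ]
      rw [hσ0def, Matrix.trace_add, Matrix.trace_smul, Matrix.trace_smul, Matrix.trace_sub,
        Matrix.trace_one, htrP]
      have hbc : (b:ℂ) * ((d:ℂ) - 1) = 1 - (x0:ℂ) := by
        have hbr : b * ((d:ℝ) - 1) = 1 - x0 := by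
          rw [hbdef]; field_simp
        calc (b:ℂ) * ((d:ℂ) - 1) = ((b * ((d:ℝ)-1) : ℝ) : ℂ) := by push_cast; ring
        _ = ((1 - x0 : ℝ) : ℂ) := by rw [hbr]
        _ = 1 - (x0:ℂ) := by push_cast; ring
      simp only [smul_eq_mul, Fintype.card_fin]
      rw [hbc]; ring
    have hJeq : (1 - l) * (1 - x0) = J := by
      rw [hx0def]; field_simp; ring
    refine ⟨σ0, ?_, htr1, ?_, ?_⟩
    · rw [hσ0def, hP]
      exact (psd_smul_real (P_psd Ψ) hx0mem.1).add (psd_smul_real (oneSubP_psd Ψ hΨ) hb0)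
    · -- binomial condition
      rw [keyRe σ0 htr1, hval, Complex.ofReal_re, hJeq, hJ]
    · -- value
      rw [hval, Complex.ofReal_re, hx0def]
  · -- lower bound
    rintro x ⟨σ, hpsd, htr, hB, hx⟩
    set t : ℝ := (star Ψ ⬝ᵥ σ.mulVec Ψ).re with htdef
    have ht0 : 0 ≤ t := by
      have h := hpsd.dotProduct_mulVec_nonneg Ψ
      rw [Complex.le_def] at h
      simpa using h.1
    have ht1 : t ≤ 1 := by
      have hpsd2 : (((1 : Matrix (Fin d) (Fin d) ℂ) - P) * σ
          * ((1 : Matrix (Fin d) (Fin d) ℂ) - P)ᴴ).PosSemidef :=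
        hpsd.mul_mul_conjTranspose_same _
      have hherm : ((1 : Matrix (Fin d) (Fin d) ℂ) - P)ᴴ
          = (1 : Matrix (Fin d) (Fin d) ℂ) - P := by
        rw [hP]; exact (oneSubP_psd Ψ hΨ).1.eq
      have hidem : ((1 : Matrix (Fin d) (Fin d) ℂ) - P)
          * ((1 : Matrix (Fin d) (Fin d) ℂ) - P) = (1 : Matrix (Fin d) (Fin d) ℂ) - P := by
        rw [hP, sub_mul, one_mul, mul_sub, mul_one, P_idem Ψ hΨ]
        abel
      have htrnn := psd_trace_nonneg hpsd2
      rw [Matrix.trace_mul_cycle, hherm, hidem] at htrnn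
      have h1 : ((1 : Matrix (Fin d) (Fin d) ℂ) - P) * σ = σ - P * σ := by
        rw [sub_mul, one_mul]
      rw [h1, Matrix.trace_sub, htr, hPtr σ] at htrnn
      rw [Complex.le_def] at htrnn
      have := htrnn.1
      simp only [Complex.zero_re, Complex.sub_re, Complex.one_re] at this
      rw [htdef]; linarith
    have hp01 : (1 - l) * (1 - t) ∈ Set.Icc (0:ℝ) 1 := by
      constructor
      · exact mul_nonneg (by linarith) (by linarith)
      · nlinarith
    have hple : (1 - l) * (1 - t) ≤ J := by
      apply binomCDF_le_rev N k hkN hp01 hJmem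
      rw [hJ]
      rw [keyRe σ htr] at hB
      exact hB
    have : 1 - t ≤ J / (1 - l) := by
      rw [le_div_iff₀ hν]; linarith
    rw [hx, hx0def]
    linarith
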